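/- Let 1 ≤ t, t′ ≤ n−1 and r, r′ ∈ ℤ. Then V(t,r) ≅ V(t′,r′) as H-modules if and only if t = t′ and r ≡ r′ (mod n). -/

import Mathlib

open scoped TensorProduct

noncomputable section

namespace SmallQuasiQuantumGroup

variable (k : Type) [Field k]

inductive QGRel (n : ℕ) (q : k) :
    FreeAlgebra k (Fin 4) → FreeAlgebra k (Fin 4) → Prop
  | KKinv : QGRel n q (FreeAlgebra.ι k 2 * FreeAlgebra.ι k 3) 1
  | KinvK : QGRel n q (FreeAlgebra.ι k 3 * FreeAlgebra.ι k 2) 1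
  | KE : QGRel n q (FreeAlgebra.ι k 2 * FreeAlgebra.ι k 0 * FreeAlgebra.ι k 3)
      (q ^ 2 • FreeAlgebra.ι k 0)
  | KF : QGRel n q (FreeAlgebra.ι k 2 * FreeAlgebra.ι k 1 * FreeAlgebra.ι k 3)
      ((q ^ 2)⁻¹ • FreeAlgebra.ι k 1)
  | EF : QGRel n q
      (FreeAlgebra.ι k 0 * FreeAlgebra.ι k 1 - FreeAlgebra.ι k 1 * FreeAlgebra.ι k 0)
      ((q - q⁻¹)⁻¹ • (FreeAlgebra.ι k 2 - FreeAlgebra.ι k 3))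
  | Epow : QGRel n q (FreeAlgebra.ι k 0 ^ n) 0
  | Fpow : QGRel n q (FreeAlgebra.ι k 1 ^ n) 0
  | Kpow : QGRel n q (FreeAlgebra.ι k 2 ^ n ^ 2) 1

def QG (n : ℕ) (q : k) : Type := RingQuot (QGRel k n q)

instance (n : ℕ) (q : k) : Ring (QG k n q) := inferInstanceAs (Ring (RingQuot _))
instance (n : ℕ) (q : k) : Algebra k (QG k n q) := inferInstanceAs (Algebra k (RingQuot _))

def gE (n : ℕ) (q : k) : QG k n q := RingQuot.mkAlgHom k (QGRel k n q) (FreeAlgebra.ι k 0)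
def gF (n : ℕ) (q : k) : QG k n q := RingQuot.mkAlgHom k (QGRel k n q) (FreeAlgebra.ι k 1)
def gK (n : ℕ) (q : k) : QG k n q := RingQuot.mkAlgHom k (QGRel k n q) (FreeAlgebra.ι k 2)
def gKi (n : ℕ) (q : k) : QG k n q := RingQuot.mkAlgHom k (QGRel k n q) (FreeAlgebra.ι k 3)

def eIdem (n : ℕ) (q : k) (i : ℕ) : QG k n q :=
  (n : k)⁻¹ • ∑ t ∈ Finset.range n, q ^ (t * i) • gK k n q ^ (t * n)

/-! ### The simple modules `V(t,r)` and `V_l` -/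

/-- The scalar `γ_j` appearing in the `F`-action on the module `V(t,r)`
(here `q = Q^n` where `Q = 𝐪` is the primitive `n²`-th root of unity). -/
def gammaCoef (n : ℕ) (Q : k) (t : ℕ) (r : ℤ) (j : ℕ) : k :=
  (Q ^ n - (Q ^ n)⁻¹)⁻¹ *
    (Q ^ (-(t : ℤ)) * ((Q ^ n) ^ (-(2 * r)) - (Q ^ n) ^ (-(2 * (r + (j : ℤ))))) /
        (1 - (Q ^ n) ^ (-2 : ℤ)) -
      Q ^ (t : ℤ) * ((Q ^ n) ^ (2 * r) - (Q ^ n) ^ (2 * (r + (j : ℤ)))) /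
        (1 - (Q ^ n) ^ (2 : ℤ)))

/-- `IsTypeV k n Q t r V` says that the `H`-module `V` is (a copy of) the `n`-dimensional
module `V(t,r)`: it has a `k`-basis `v₀, …, v_{n-1}` (indexed here from `0`, corresponding to
`v₁, …, v_n` in the paper) with `K vᵢ = 𝐪^t q^{2(r+i)} vᵢ`, `E vᵢ = vᵢ₊₁` (`E v_{n-1} = 0`),
`F v₀ = 0` and `F vᵢ = γ_i v_{i-1}` for `i ≥ 1`. -/
def IsTypeV (n : ℕ) (Q : k) (t : ℕ) (r : ℤ) (V : Type) [AddCommGroup V] [Module k V]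
    [Module (QG k n (Q ^ n)) V] : Prop :=
  ∃ v : Module.Basis (Fin n) k V,
    (∀ i : Fin n, gK k n (Q ^ n) • v i =
      (Q ^ (t : ℤ) * (Q ^ n) ^ (2 * (r + (i.1 : ℤ)))) • v i) ∧
    (∀ i : Fin n, gE k n (Q ^ n) • v i = if h : i.1 + 1 < n then v ⟨i.1 + 1, h⟩ else 0) ∧
    (∀ i : Fin n, i.1 = 0 → gF k n (Q ^ n) • v i = 0) ∧
    (∀ i : Fin n, 0 < i.1 → gF k n (Q ^ n) • v i =
      gammaCoef k n Q t r i.1 • v ⟨i.1 - 1, lt_of_le_of_lt (Nat.sub_le _ _) i.2⟩)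

/-- The scalar `β_i(l)` appearing in the `F`-action on the simple module `V_l`. -/
def betaCoef (n : ℕ) (Q : k) (l i : ℕ) : k :=
  (∑ s ∈ Finset.range i, (Q ^ n) ^ (2 * s)) * (1 - (Q ^ n) ^ (2 * ((i : ℤ) - (l : ℤ)))) /
    ((Q ^ n) ^ (2 * (i : ℤ) - (l : ℤ)) - (Q ^ n) ^ (2 * (i : ℤ) - (l : ℤ) - 2))

/-- `IsTypeVl k n Q l V` says that the `H`-module `V` is (a copy of) the `l`-dimensional
simple module `V_l`: it has a `k`-basis `m₀, …, m_{l-1}` (indexed here from `0`, corresponding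
to `m₁, …, m_l` in the paper) with `K mᵢ = q^{2i+1-l} mᵢ`, `E mᵢ = mᵢ₊₁` (`E m_{l-1} = 0`),
`F m₀ = 0` and `F mᵢ = β_i(l) m_{i-1}` for `i ≥ 1`. -/
def IsTypeVl (n : ℕ) (Q : k) (l : ℕ) (V : Type) [AddCommGroup V] [Module k V]
    [Module (QG k n (Q ^ n)) V] : Prop :=
  ∃ m : Module.Basis (Fin l) k V,
    (∀ i : Fin l, gK k n (Q ^ n) • m i = (Q ^ n) ^ (2 * (i.1 : ℤ) + 1 - (l : ℤ)) • m i) ∧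
    (∀ i : Fin l, gE k n (Q ^ n) • m i = if h : i.1 + 1 < l then m ⟨i.1 + 1, h⟩ else 0) ∧
    (∀ i : Fin l, i.1 = 0 → gF k n (Q ^ n) • m i = 0) ∧
    (∀ i : Fin l, 0 < i.1 → gF k n (Q ^ n) • m i =
      betaCoef k n Q l i.1 • m ⟨i.1 - 1, lt_of_le_of_lt (Nat.sub_le _ _) i.2⟩)

/-! ### Corner algebras `He_i` -/

/-- For a central idempotent `a`, the set `{x | xa = x ∧ ax = x}` (which equals `Ra`)
is a `k`-submodule of `R`. -/
def cornerSubmodule (R : Type) [Ring R] [Algebra k R] (a : R) : Submodule k R where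
  carrier := {x | x * a = x ∧ a * x = x}
  add_mem' := fun hx hy => ⟨by rw [add_mul, hx.1, hy.1], by rw [mul_add, hx.2, hy.2]⟩
  zero_mem' := ⟨zero_mul a, mul_zero a⟩
  smul_mem' := fun c x hx => ⟨by rw [smul_mul_assoc, hx.1], by rw [mul_smul_comm, hx.2]⟩

/-- The corner ring `Ra = {x | xa = x ∧ ax = x}` of an idempotent `a`; it is a `k`-algebra
with identity element `a`. -/
def Corner (R : Type) [Ring R] [Algebra k R] (a : R) (_ : IsIdempotentElem a) : Type :=
  ↥(cornerSubmodule k R a)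

namespace Corner

variable {R : Type} [Ring R] [Algebra k R] {a : R} {ha : IsIdempotentElem a}

instance : AddCommGroup (Corner k R a ha) :=
  inferInstanceAs (AddCommGroup ↥(cornerSubmodule k R a))

instance : Module k (Corner k R a ha) :=
  inferInstanceAs (Module k ↥(cornerSubmodule k R a))

/-- The underlying element of `R` of an element of the corner ring. -/
def val (x : Corner k R a ha) : R := Subtype.val x

instance : Ring (Corner k R a ha) :=
  { (inferInstanceAs (AddCommGroup ↥(cornerSubmodule k R a)) :
      AddCommGroup ↥(cornerSubmodule k R a)) with
    mul := fun x y => ⟨x.1 * y.1,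
      by rw [mul_assoc, y.2.1], by rw [← mul_assoc, x.2.2]⟩
    one := ⟨a, ha, ha⟩
    mul_assoc := fun x y z => Subtype.ext (mul_assoc x.1 y.1 z.1)
    one_mul := fun x => Subtype.ext x.2.2
    mul_one := fun x => Subtype.ext x.2.1
    left_distrib := fun x y z => Subtype.ext (mul_add x.1 y.1 z.1)
    right_distrib := fun x y z => Subtype.ext (add_mul x.1 y.1 z.1)
    zero_mul := fun x => Subtype.ext (zero_mul x.1)
    mul_zero := fun x => Subtype.ext (mul_zero x.1) }

instance : Algebra k (Corner k R a ha) :=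
  @Algebra.ofModule k (Corner k R a ha) _ _ (inferInstanceAs (Module k ↥(cornerSubmodule k R a)))
    (fun c x y => Subtype.ext (smul_mul_assoc c x.1 y.1))
    (fun c x y => Subtype.ext (mul_smul_comm c x.1 y.1))

end Corner
/-! ### The comultiplication data -/

/-- The idempotent `1_s = (1/n²) ∑_{r=0}^{n²-1} 𝐪^{sr} K^r` of `H`. -/
def oneIdem (n : ℕ) (Q : k) (s : ℕ) : QG k n (Q ^ n) :=
  ((n : k) ^ 2)⁻¹ • ∑ r ∈ Finset.range (n ^ 2), Q ^ (s * r) • gK k n (Q ^ n) ^ r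

/-- `T₁ = ∑_{i=0}^{2n-1} 1_i`. -/
def Tone (n : ℕ) (Q : k) : QG k n (Q ^ n) := ∑ i ∈ Finset.range (2 * n), oneIdem k n Q i
/-- `T₂ = ∑_{i=2n}^{n²-1} 1_i`. -/
def Ttwo (n : ℕ) (Q : k) : QG k n (Q ^ n) := ∑ i ∈ Finset.Ico (2 * n) (n ^ 2), oneIdem k n Q i
/-- `T₃ = ∑_{i=0}^{n²-2n-1} 1_i`. -/
def Tthree (n : ℕ) (Q : k) : QG k n (Q ^ n) :=
  ∑ i ∈ Finset.range (n ^ 2 - 2 * n), oneIdem k n Q i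
/-- `T₄ = ∑_{i=n²-2n}^{n²-1} 1_i`. -/
def Tfour (n : ℕ) (Q : k) : QG k n (Q ^ n) :=
  ∑ i ∈ Finset.Ico (n ^ 2 - 2 * n) (n ^ 2), oneIdem k n Q i

/-- `IsDelta k n Q Δ` says that the `k`-algebra map `Δ : H → H ⊗ H` is the comultiplication
of the small quasi-quantum group, i.e. takes the prescribed values on `K`, `K⁻¹`, `E`, `F`. -/
def IsDelta (n : ℕ) (Q : k)
    (Δ : QG k n (Q ^ n) →ₐ[k] QG k n (Q ^ n) ⊗[k] QG k n (Q ^ n)) : Prop :=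
  Δ (gK k n (Q ^ n)) = gK k n (Q ^ n) ⊗ₜ[k] gK k n (Q ^ n) ∧
  Δ (gKi k n (Q ^ n)) = gKi k n (Q ^ n) ⊗ₜ[k] gKi k n (Q ^ n) ∧
  Δ (gE k n (Q ^ n)) =
    (gE k n (Q ^ n) ⊗ₜ[k] 1) *
        (Tone k n Q ⊗ₜ[k] gK k n (Q ^ n) ^ (n ^ 2 - n) + Ttwo k n Q ⊗ₜ[k] 1) +
      gK k n (Q ^ n) ⊗ₜ[k] gE k n (Q ^ n) ∧
  Δ (gF k n (Q ^ n)) =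
    (gF k n (Q ^ n) ⊗ₜ[k] 1) *
        (Tthree k n Q ⊗ₜ[k] gK k n (Q ^ n) ^ (n ^ 2 - 1) +
          Tfour k n Q ⊗ₜ[k] gK k n (Q ^ n) ^ (n - 1)) +
      1 ⊗ₜ[k] gF k n (Q ^ n)

/-- The action of an algebra `A` on a module `M`, as a `k`-linear map `A →ₗ[k] (M →ₗ[k] M)`. -/
def endoMap (A M : Type) [Ring A] [Algebra k A] [AddCommGroup M] [Module k M] [Module A M]
    [IsScalarTower k A M] : A →ₗ[k] M →ₗ[k] M where
  toFun a :=
    { toFun := fun m => a • m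
      map_add' := fun _ _ => smul_add _ _ _
      map_smul' := fun c m => smul_comm a c m }
  map_add' a b := LinearMap.ext fun m => add_smul a b m
  map_smul' c a := LinearMap.ext fun m => smul_assoc c a m

/-- `SmulViaDelta k n Q Δ M N` says that the given `H`-module structure on `M ⊗[k] N` is the
one obtained from the `H`-module structures of `M` and `N` through the comultiplication `Δ`:
`h` acts on `M ⊗ N` as the operator `(ρ_M ⊗ ρ_N)(Δ(h))`. -/
def SmulViaDelta (n : ℕ) (Q : k)
    (Δ : QG k n (Q ^ n) →ₐ[k] QG k n (Q ^ n) ⊗[k] QG k n (Q ^ n)) (M N : Type)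
    [AddCommGroup M] [Module k M] [Module (QG k n (Q ^ n)) M]
    [IsScalarTower k (QG k n (Q ^ n)) M]
    [AddCommGroup N] [Module k N] [Module (QG k n (Q ^ n)) N]
    [IsScalarTower k (QG k n (Q ^ n)) N]
    [Module (QG k n (Q ^ n)) (M ⊗[k] N)] : Prop :=
  ∀ (h : QG k n (Q ^ n)) (x : M ⊗[k] N),
    h • x = TensorProduct.homTensorHomMap (RingHom.id k) M N M N
      (TensorProduct.map (endoMap k (QG k n (Q ^ n)) M) (endoMap k (QG k n (Q ^ n)) N)
        (Δ h)) x

/-! ### The elements `T^i_j` and `A^{ij}_k` -/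

/-- The idempotent `T^i_j = (1/n) ∑_{s=0}^{n-1} 𝐪^{((j-1)n+i)s} K^s e_i` of `He_i`. -/
def Tij (n : ℕ) (Q : k) (i j : ℕ) : QG k n (Q ^ n) :=
  (n : k)⁻¹ • ∑ s ∈ Finset.range n,
    Q ^ (((j - 1) * n + i) * s) • (gK k n (Q ^ n) ^ s * eIdem k n (Q ^ n) i)

/-- The scalar `a^{ij}_{k1}` for `k ≥ 2`. -/
def aOne (n : ℕ) (Q : k) (i j kk : ℕ) : k :=
  ((Q ^ n) ^ (2 * ((kk : ℤ) - 1)) * Q ^ ((1 - (j : ℤ)) * n - (i : ℤ)) -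
      (Q ^ n) ^ (2 * (1 - (kk : ℤ))) * Q ^ ((i : ℤ) - (1 - (j : ℤ)) * n)) /
    (Q ^ n - (Q ^ n)⁻¹)

/-- The scalars `a^{ij}_{ks}` (`1 ≤ s ≤ k ≤ n`), defined by `a^{ij}_{kk} = 1`,
`a^{ij}_{k1}` as in `aOne`, and the recursion `a^{ij}_{ks} = a^{ij}_{k1} + a^{ij}_{k-1,s-1}`. -/
def aCoef (n : ℕ) (Q : k) (i j : ℕ) : ℕ → ℕ → k
  | _, 0 => 0
  | kk, 1 => if kk = 1 then 1 else aOne k n Q i j kk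
  | kk, s + 2 => if kk = s + 2 then 1 else aOne k n Q i j kk + aCoef n Q i j (kk - 1) (s + 1)

/-- The element `A^{ij}_k = ∑_{p=0}^{k-1} (∏_{t=0}^{p} a^{ij}_{k,k-t}) E^{k-1-p} F^{n-1-p} e_i`
of `H`. -/
def Aelem (n : ℕ) (Q : k) (i j kk : ℕ) : QG k n (Q ^ n) :=
  ∑ p ∈ Finset.range kk,
    (∏ t ∈ Finset.range (p + 1), aCoef k n Q i j kk (kk - t)) •
      (gE k n (Q ^ n) ^ (kk - 1 - p) * gF k n (Q ^ n) ^ (n - 1 - p) * eIdem k n (Q ^ n) i)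

/-- The integer `r_{k,j}`. -/
def rkj (n kk j : ℕ) : ℤ :=
  if (2 * (kk : ℤ) - (j : ℤ)) % 2 = 0 then (2 * (kk : ℤ) - (j : ℤ)) / 2
  else ((n : ℤ) + 2 * (kk : ℤ) - (j : ℤ)) / 2

/-! ### The algebra `B_i` of Statement 1 -/

/-- Defining relations of the algebra `B_i`, on the generators
`0 ↦ x`, `1 ↦ y`, `2 ↦ z`, `3 ↦ z'`. -/
inductive BRel (n i : ℕ) (q : k) :
    FreeAlgebra k (Fin 4) → FreeAlgebra k (Fin 4) → Prop
  | zz' : BRel n i q (FreeAlgebra.ι k 2 * FreeAlgebra.ι k 3) 1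
  | z'z : BRel n i q (FreeAlgebra.ι k 3 * FreeAlgebra.ι k 2) 1
  | zx : BRel n i q (FreeAlgebra.ι k 2 * FreeAlgebra.ι k 0 * FreeAlgebra.ι k 3)
      (q ^ 2 • FreeAlgebra.ι k 0)
  | zy : BRel n i q (FreeAlgebra.ι k 2 * FreeAlgebra.ι k 1 * FreeAlgebra.ι k 3)
      ((q ^ 2)⁻¹ • FreeAlgebra.ι k 1)
  | xy : BRel n i q
      (FreeAlgebra.ι k 0 * FreeAlgebra.ι k 1 - FreeAlgebra.ι k 1 * FreeAlgebra.ι k 0)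
      ((q - q⁻¹)⁻¹ • (FreeAlgebra.ι k 2 - FreeAlgebra.ι k 3))
  | xpow : BRel n i q (FreeAlgebra.ι k 0 ^ n) 0
  | ypow : BRel n i q (FreeAlgebra.ι k 1 ^ n) 0
  | zpow : BRel n i q (FreeAlgebra.ι k 2 ^ n) (q ^ (n - i) • 1)

section Statement5Aux

variable {k : Type} [Field k]

private lemma zpow_congr_of_dvd {x : k} (hx : x ≠ 0) {n : ℕ} (hxn : x ^ n = 1) {a b : ℤ}
    (h : (n : ℤ) ∣ a - b) : x ^ a = x ^ b := by
  obtain ⟨s, hs⟩ := h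
  have ha : a = b + (n : ℤ) * s := by linarith
  rw [ha, zpow_add₀ hx, zpow_mul, zpow_natCast, hxn, one_zpow, mul_one]

private lemma gKi_mul_gK (n : ℕ) (q : k) : gKi k n q * gK k n q = 1 := by
  have h := RingQuot.mkAlgHom_rel k (QGRel.KinvK (k := k) (n := n) (q := q))
  rw [map_mul, map_one] at h
  exact h

private lemma gKi_smul {n : ℕ} {q : k} {V : Type} [AddCommGroup V] [Module k V]
    [Module (QG k n q) V] [IsScalarTower k (QG k n q) V]
    {x : V} {lam : k} (hlam : lam ≠ 0) (h : gK k n q • x = lam • x) :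
    gKi k n q • x = lam⁻¹ • x := by
  have h1 : gKi k n q • gK k n q • x = x := by
    rw [← mul_smul, gKi_mul_gK, one_smul]
  rw [h, smul_comm] at h1
  calc gKi k n q • x = lam⁻¹ • (lam • (gKi k n q • x)) := by
        rw [smul_smul, inv_mul_cancel₀ hlam, one_smul]
    _ = lam⁻¹ • x := by rw [h1]

private lemma smul_comm_of_basis {ι : Type} {n : ℕ} {q : k} {V W : Type}
    [AddCommGroup V] [Module k V] [Module (QG k n q) V] [IsScalarTower k (QG k n q) V]
    [AddCommGroup W] [Module k W] [Module (QG k n q) W] [IsScalarTower k (QG k n q) W]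
    (g : V →ₗ[k] W) (h : QG k n q) (v : Module.Basis ι k V)
    (hb : ∀ i, g (h • v i) = h • g (v i)) (x : V) : g (h • x) = h • g x := by
  have he : g ∘ₗ endoMap k (QG k n q) V h = endoMap k (QG k n q) W h ∘ₗ g :=
    Module.Basis.ext v fun i => by simpa [endoMap] using hb i
  simpa [endoMap] using LinearMap.congr_fun he x

private lemma qg_linear_ext {n : ℕ} {q : k} {V W : Type}
    [AddCommGroup V] [Module k V] [Module (QG k n q) V] [IsScalarTower k (QG k n q) V]
    [AddCommGroup W] [Module k W] [Module (QG k n q) W] [IsScalarTower k (QG k n q) W]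
    (g : V →ₗ[k] W)
    (hE : ∀ x, g (gE k n q • x) = gE k n q • g x)
    (hF : ∀ x, g (gF k n q • x) = gF k n q • g x)
    (hK : ∀ x, g (gK k n q • x) = gK k n q • g x)
    (hKi : ∀ x, g (gKi k n q • x) = gKi k n q • g x)
    (h : QG k n q) (x : V) : g (h • x) = h • g x := by
  obtain ⟨a, rfl⟩ := RingQuot.mkAlgHom_surjective k (QGRel k n q) h
  revert x
  induction a using FreeAlgebra.induction with
  | grade0 c =>
      intro x
      rw [AlgHom.commutes]
      show g ((algebraMap k (QG k n q) c) • x) = (algebraMap k (QG k n q) c) • g x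
      rw [algebraMap_smul, algebraMap_smul, map_smul]
  | grade1 i =>
      fin_cases i
      · exact hE
      · exact hF
      · exact hK
      · exact hKi
  | mul a b ha hb =>
      intro x
      have key : ∀ A B : QG k n q, (∀ y, g (A • y) = A • g y) → (∀ y, g (B • y) = B • g y) →
          g ((A * B) • x) = (A * B) • g x := fun A B hA hB => by
        rw [mul_smul, mul_smul, hA, hB]
      have := key _ _ ha hb
      rw [map_mul]
      exact this
  | add a b ha hb =>
      intro x
      have key : ∀ A B : QG k n q, (∀ y, g (A • y) = A • g y) → (∀ y, g (B • y) = B • g y) →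
          g ((A + B) • x) = (A + B) • g x := fun A B hA hB => by
        rw [add_smul, add_smul, map_add, hA, hB]
      have := key _ _ ha hb
      rw [map_add]
      exact this

end Statement5Aux

/-- Let `1 ≤ t, t' ≤ n-1` and `r, r' ∈ ℤ`.  Then `V(t,r) ≅ V(t',r')` as
`H`-modules if and only if `t = t'` and `r ≡ r' (mod n)`. -/
theorem statement5 [IsAlgClosed k] [CharZero k] (n : ℕ) (hn : 2 < n) (hodd : Odd n)
    (Q : k) (hQ : IsPrimitiveRoot Q (n ^ 2)) (t t' : ℕ) (ht1 : 1 ≤ t) (ht : t ≤ n - 1)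
    (ht'1 : 1 ≤ t') (ht' : t' ≤ n - 1) (r r' : ℤ)
    (V : Type) [AddCommGroup V] [Module k V] [Module (QG k n (Q ^ n)) V]
    [IsScalarTower k (QG k n (Q ^ n)) V] (hV : IsTypeV k n Q t r V)
    (W : Type) [AddCommGroup W] [Module k W] [Module (QG k n (Q ^ n)) W]
    [IsScalarTower k (QG k n (Q ^ n)) W] (hW : IsTypeV k n Q t' r' W) :
    Nonempty (V ≃ₗ[QG k n (Q ^ n)] W) ↔ t = t' ∧ r ≡ r' [ZMOD (n : ℤ)] := by
  obtain ⟨m, rfl⟩ : ∃ m, n = m + 1 := ⟨n - 1, by omega⟩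
  have hQpow : Q ^ ((m + 1) ^ 2) = 1 := hQ.pow_eq_one
  have hQ0 : Q ≠ 0 := by
    intro h
    rw [h, zero_pow (by positivity)] at hQpow
    exact zero_ne_one hQpow
  have hq0 : Q ^ (m + 1) ≠ 0 := pow_ne_zero _ hQ0
  have hqn : (Q ^ (m + 1)) ^ (m + 1) = 1 := by
    rw [← pow_mul, ← pow_two]
    exact hQpow
  have key : ∀ a b : ℤ, ((m + 1 : ℕ) : ℤ) ∣ a - b → (Q ^ (m + 1)) ^ a = (Q ^ (m + 1)) ^ b :=
    fun a b h => zpow_congr_of_dvd hq0 hqn h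
  have hN0 : ((m + 1 : ℕ) : ℤ) ≠ 0 := by positivity
  constructor
  · rintro ⟨f⟩
    obtain ⟨v, hvK, hvE, hvF0, hvF⟩ := hV
    obtain ⟨w, hwK, hwE, hwF0, hwF⟩ := hW
    set g := f.restrictScalars k with hgdef
    have hg : ∀ (h : QG k (m + 1) (Q ^ (m + 1))) (y : V), g (h • y) = h • g y :=
      fun h y => f.map_smul h y
    set x : W := g (v (Fin.last m)) with hxdef
    have hx0 : x ≠ 0 := by
      rw [hxdef]
      exact (LinearEquiv.map_ne_zero_iff g).mpr (v.ne_zero _)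
    set c : Fin (m + 1) → k := fun i => w.repr x i with hcdef
    have hxrepr : x = ∑ i, c i • w i := (w.sum_repr x).symm
    have act_sum : ∀ h : QG k (m + 1) (Q ^ (m + 1)), h • x = ∑ i, c i • (h • w i) := by
      intro h
      conv_lhs => rw [hxrepr]
      rw [Finset.smul_sum]
      exact Finset.sum_congr rfl fun i _ => smul_comm h (c i) (w i)
    have hEx : gE k (m + 1) (Q ^ (m + 1)) • x = 0 := by
      have hEv : gE k (m + 1) (Q ^ (m + 1)) • v (Fin.last m) = 0 := by
        rw [hvE]; simp
      rw [hxdef, ← hg, hEv, map_zero]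
    have hEsum : ∑ i, c i • (gE k (m + 1) (Q ^ (m + 1)) • w i)
        = ∑ j : Fin m, c j.castSucc • w j.succ := by
      rw [Fin.sum_univ_castSucc]
      have hL : gE k (m + 1) (Q ^ (m + 1)) • w (Fin.last m) = 0 := by
        rw [hwE]; simp
      rw [hL, smul_zero, add_zero]
      refine Finset.sum_congr rfl fun j _ => ?_
      have hj : (j.castSucc).1 + 1 < m + 1 := by simp
      have hje : (⟨(j.castSucc).1 + 1, hj⟩ : Fin (m + 1)) = j.succ := Fin.ext (by simp)
      rw [hwE, dif_pos hj, hje]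
    have hsum : ∑ j : Fin m, c j.castSucc • w j.succ = 0 := by
      rw [← hEsum, ← act_sum, hEx]
    have hc0 : ∀ j : Fin m, c j.castSucc = 0 := by
      have li : LinearIndependent k fun j : Fin m => w j.succ :=
        w.linearIndependent.comp Fin.succ (Fin.succ_injective m)
      exact Fintype.linearIndependent_iff.mp li _ hsum
    have hxlast : x = c (Fin.last m) • w (Fin.last m) := by
      conv_lhs => rw [hxrepr]
      rw [Fin.sum_univ_castSucc]
      simp [hc0]
    have hcl : c (Fin.last m) ≠ 0 := by
      intro h
      exact hx0 (by rw [hxlast, h, zero_smul])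
    have hKgx1 : gK k (m + 1) (Q ^ (m + 1)) • x =
        ((Q ^ (t : ℤ) * (Q ^ (m + 1)) ^ (2 * (r + ((Fin.last m).1 : ℤ))))
          * c (Fin.last m)) • w (Fin.last m) := by
      rw [hxdef, ← hg, hvK, map_smul, ← hxdef, hxlast, smul_smul]
    have hKgx2 : gK k (m + 1) (Q ^ (m + 1)) • x =
        (c (Fin.last m) * (Q ^ (t' : ℤ) * (Q ^ (m + 1)) ^ (2 * (r' + ((Fin.last m).1 : ℤ)))))
          • w (Fin.last m) := by
      conv_lhs => rw [hxlast]
      rw [smul_comm, hwK, smul_smul]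
    have hmu : c (Fin.last m) * (Q ^ (t' : ℤ) * (Q ^ (m + 1)) ^ (2 * (r' + ((Fin.last m).1 : ℤ))))
        = (Q ^ (t : ℤ) * (Q ^ (m + 1)) ^ (2 * (r + ((Fin.last m).1 : ℤ)))) * c (Fin.last m) :=
      smul_left_injective k (w.ne_zero (Fin.last m)) (hKgx2.symm.trans hKgx1)
    have hML : Q ^ (t' : ℤ) * (Q ^ (m + 1)) ^ (2 * (r' + (m : ℤ)))
        = Q ^ (t : ℤ) * (Q ^ (m + 1)) ^ (2 * (r + (m : ℤ))) := by
      have hcc : c (Fin.last m) * (Q ^ (t' : ℤ) * (Q ^ (m + 1)) ^ (2 * (r' + ((Fin.last m).1 : ℤ))))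
          = c (Fin.last m) * (Q ^ (t : ℤ) * (Q ^ (m + 1)) ^ (2 * (r + ((Fin.last m).1 : ℤ)))) := by
        rw [hmu, mul_comm]
      have h2 := mul_left_cancel₀ hcl hcc
      simpa [Fin.val_last] using h2
    have qz : ∀ z : ℤ, (Q ^ (m + 1)) ^ z = Q ^ (((m + 1 : ℕ) : ℤ) * z) := fun z => by
      rw [← zpow_natCast Q (m + 1), ← zpow_mul]
    have hQQ : Q ^ ((t' : ℤ) + ((m + 1 : ℕ) : ℤ) * (2 * (r' + (m : ℤ))))
        = Q ^ ((t : ℤ) + ((m + 1 : ℕ) : ℤ) * (2 * (r + (m : ℤ)))) := by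
      rw [zpow_add₀ hQ0, zpow_add₀ hQ0, ← qz (2 * (r' + (m : ℤ))), ← qz (2 * (r + (m : ℤ)))]
      exact hML
    have hQdiff : Q ^ (((t' : ℤ) + ((m + 1 : ℕ) : ℤ) * (2 * (r' + (m : ℤ))))
        - ((t : ℤ) + ((m + 1 : ℕ) : ℤ) * (2 * (r + (m : ℤ))))) = 1 := by
      rw [zpow_sub₀ hQ0, hQQ, div_self (zpow_ne_zero _ hQ0)]
    have hdvd : (((m + 1) ^ 2 : ℕ) : ℤ) ∣ (((t' : ℤ) + ((m + 1 : ℕ) : ℤ) * (2 * (r' + (m : ℤ))))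
        - ((t : ℤ) + ((m + 1 : ℕ) : ℤ) * (2 * (r + (m : ℤ))))) :=
      (hQ.zpow_eq_one_iff_dvd _).mp hQdiff
    obtain ⟨u, hu⟩ := hdvd
    have htt : ((m + 1 : ℕ) : ℤ) ∣ (t' : ℤ) - t :=
      ⟨((m + 1 : ℕ) : ℤ) * u - 2 * ((r' : ℤ) - r), by push_cast at hu ⊢; linear_combination hu⟩
    have htteq : t = t' := by
      have habs : |(t' : ℤ) - t| < ((m + 1 : ℕ) : ℤ) := by
        have h1 : (1 : ℤ) ≤ (t : ℤ) := by exact_mod_cast ht1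
        have h2 : (t : ℤ) ≤ m := by
          have : t ≤ m := by omega
          exact_mod_cast this
        have h3 : (1 : ℤ) ≤ (t' : ℤ) := by exact_mod_cast ht'1
        have h4 : (t' : ℤ) ≤ m := by
          have : t' ≤ m := by omega
          exact_mod_cast this
        rw [abs_lt]
        omega
      have := Int.eq_zero_of_abs_lt_dvd htt habs
      omega
    refine ⟨htteq, ?_⟩
    have hcast : (t : ℤ) = (t' : ℤ) := by exact_mod_cast htteq
    have h2 : 2 * ((r' : ℤ) - r) = ((m + 1 : ℕ) : ℤ) * u := by
      apply mul_left_cancel₀ hN0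
      push_cast at hu ⊢
      linear_combination hu + hcast
    obtain ⟨j, hjodd⟩ := hodd
    have hco : IsCoprime ((m + 1 : ℕ) : ℤ) 2 := ⟨1, -(j : ℤ), by push_cast; omega⟩
    have hdvd2 : ((m + 1 : ℕ) : ℤ) ∣ ((r' : ℤ) - r) * 2 := ⟨u, by linear_combination h2⟩
    exact Int.modEq_iff_dvd.mpr (hco.dvd_of_dvd_mul_right hdvd2)
  · rintro ⟨rfl, hmod⟩
    obtain ⟨v, hvK, hvE, hvF0, hvF⟩ := hV
    obtain ⟨w, hwK, hwE, hwF0, hwF⟩ := hW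
    obtain ⟨e, he⟩ : ((m + 1 : ℕ) : ℤ) ∣ r' - r := Int.ModEq.dvd hmod
    have lamEq : ∀ i : Fin (m + 1),
        Q ^ (t : ℤ) * (Q ^ (m + 1)) ^ (2 * (r + (i.1 : ℤ)))
          = Q ^ (t : ℤ) * (Q ^ (m + 1)) ^ (2 * (r' + (i.1 : ℤ))) := fun i => by
      rw [key (2 * (r + (i.1 : ℤ))) (2 * (r' + (i.1 : ℤ))) ⟨-2 * e, by linear_combination -2 * he⟩]
    have gamEq : ∀ j : ℕ, gammaCoef k (m + 1) Q t r j = gammaCoef k (m + 1) Q t r' j := by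
      intro j
      unfold gammaCoef
      rw [key (-(2 * r)) (-(2 * r')) ⟨2 * e, by linear_combination 2 * he⟩,
        key (-(2 * (r + (j : ℤ)))) (-(2 * (r' + (j : ℤ)))) ⟨2 * e, by linear_combination 2 * he⟩,
        key (2 * r) (2 * r') ⟨-2 * e, by linear_combination -2 * he⟩,
        key (2 * (r + (j : ℤ))) (2 * (r' + (j : ℤ))) ⟨-2 * e, by linear_combination -2 * he⟩]
    set g : V ≃ₗ[k] W := v.equiv w (Equiv.refl _) with hgdef
    have hgb : ∀ i, g (v i) = w i := fun i => by simp [hgdef]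
    have hlamne : ∀ i : Fin (m + 1),
        Q ^ (t : ℤ) * (Q ^ (m + 1)) ^ (2 * (r + (i.1 : ℤ))) ≠ 0 :=
      fun i => mul_ne_zero (zpow_ne_zero _ hQ0) (zpow_ne_zero _ hq0)
    have hlamne' : ∀ i : Fin (m + 1),
        Q ^ (t : ℤ) * (Q ^ (m + 1)) ^ (2 * (r' + (i.1 : ℤ))) ≠ 0 :=
      fun i => mul_ne_zero (zpow_ne_zero _ hQ0) (zpow_ne_zero _ hq0)
    have hEb : ∀ i, g (gE k (m + 1) (Q ^ (m + 1)) • v i)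
        = gE k (m + 1) (Q ^ (m + 1)) • g (v i) := by
      intro i
      rw [hvE i, hgb i, hwE i]
      split_ifs with h
      · exact hgb _
      · exact map_zero g
    have hKb : ∀ i, g (gK k (m + 1) (Q ^ (m + 1)) • v i)
        = gK k (m + 1) (Q ^ (m + 1)) • g (v i) := by
      intro i
      rw [hvK i, map_smul, hgb i, hwK i, lamEq i]
    have hFb : ∀ i, g (gF k (m + 1) (Q ^ (m + 1)) • v i)
        = gF k (m + 1) (Q ^ (m + 1)) • g (v i) := by
      intro i
      rcases Nat.eq_zero_or_pos i.1 with h0 | hpos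
      · rw [hgb i, hvF0 i h0, hwF0 i h0, map_zero]
      · rw [hvF i hpos, map_smul, hgb, hgb, hwF i hpos, gamEq]
    have hKib : ∀ i, g (gKi k (m + 1) (Q ^ (m + 1)) • v i)
        = gKi k (m + 1) (Q ^ (m + 1)) • g (v i) := by
      intro i
      rw [gKi_smul (hlamne i) (hvK i), map_smul, hgb i,
        gKi_smul (hlamne' i) (hwK i), lamEq i]
    have hall : ∀ (h : QG k (m + 1) (Q ^ (m + 1))) (x : V), g (h • x) = h • g x :=
      qg_linear_ext g.toLinearMap
        (smul_comm_of_basis g.toLinearMap _ v hEb)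
        (smul_comm_of_basis g.toLinearMap _ v hFb)
        (smul_comm_of_basis g.toLinearMap _ v hKb)
        (smul_comm_of_basis g.toLinearMap _ v hKib)
    refine Nonempty.intro ?_
    exact { toFun := g, map_add' := map_add g, map_smul' := hall,
            invFun := g.symm, left_inv := g.left_inv, right_inv := g.right_inv }


end SmallQuasiQuantumGroup
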